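/- Let a be an algebraic integer with minimal polynomial f of degree d over ℚ, with conjugates α_1,...,α_d. If all conjugates α_i of a have complex absolute value at most 1, then the set {a^n : n ≥ 1} is finite, hence a is zero or a root of unity. -/

import Mathlib

open IntermediateField Polynomial

/-- If all complex roots (conjugates) of the minimal polynomial of an algebraic integer `a`
have absolute value at most `1`, then the set of positive powers of `a` is finite, and
hence `a` is zero or a root of unity. -/
theorem stmt_1 (a : ℂ) (ha : IsIntegral ℤ a)
    (hconj : ∀ α ∈ (minpoly ℚ a).aroots ℂ, ‖α‖ ≤ 1) :
    {x : ℂ | ∃ n : ℕ, 1 ≤ n ∧ x = a ^ n}.Finite ∧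
      (a = 0 ∨ ∃ n : ℕ, 0 < n ∧ a ^ n = 1) := by
  have haQ : IsIntegral ℚ a := ha.tower_top
  let K := ℚ⟮a⟯
  haveI : FiniteDimensional ℚ K := IntermediateField.adjoin.finiteDimensional haQ
  haveI : NumberField K := ⟨⟩
  set x : K := IntermediateField.AdjoinSimple.gen ℚ a with hxdef
  have hxa : algebraMap K ℂ x = a := rfl
  have hxint : IsIntegral ℤ x := by
    rwa [← isIntegral_algebraMap_iff (algebraMap K ℂ).injective, hxa]
  have hmin : minpoly ℚ x = minpoly ℚ a := (minpoly.algebraMap_eq (algebraMap K ℂ).injective x).symm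
  have hnorm : ∀ φ : K →+* ℂ, ‖φ x‖ ≤ 1 := by
    intro φ
    have hφ : aeval (φ x) (minpoly ℚ x) = 0 := by
      rw [show φ x = φ.toRatAlgHom x from rfl, aeval_algHom_apply, minpoly.aeval, map_zero]
    have hroot : φ x ∈ (minpoly ℚ a).aroots ℂ := by
      rw [mem_aroots]
      exact ⟨minpoly.ne_zero haQ, by rwa [hmin] at hφ⟩
    exact hconj _ hroot
  have hfin : {y : K | IsIntegral ℤ y ∧ ∀ φ : K →+* ℂ, ‖φ y‖ ≤ 1}.Finite :=
    NumberField.Embeddings.finite_of_norm_le K ℂ 1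
  have hsub : {z : ℂ | ∃ n : ℕ, 1 ≤ n ∧ z = a ^ n} ⊆
      (algebraMap K ℂ) '' {y : K | IsIntegral ℤ y ∧ ∀ φ : K →+* ℂ, ‖φ y‖ ≤ 1} := by
    rintro z ⟨n, hn, rfl⟩
    refine ⟨x ^ n, ⟨hxint.pow n, fun φ => ?_⟩, by rw [map_pow, hxa]⟩
    rw [map_pow, norm_pow]
    exact pow_le_one₀ (norm_nonneg _) (hnorm φ)
  have hFin : {z : ℂ | ∃ n : ℕ, 1 ≤ n ∧ z = a ^ n}.Finite := (hfin.image _).subset hsub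
  refine ⟨hFin, ?_⟩
  by_cases ha0 : a = 0
  · exact Or.inl ha0
  · right
    obtain ⟨m, -, k, -, hne, heq⟩ :=
      Set.Infinite.exists_ne_map_eq_of_mapsTo (f := fun n : ℕ => a ^ (n + 1))
        (t := {z : ℂ | ∃ n : ℕ, 1 ≤ n ∧ z = a ^ n})
        Set.infinite_univ (fun n _ => ⟨n + 1, by omega, rfl⟩) hFin
    wlog hlt : k < m generalizing m k
    · exact this k m hne.symm heq.symm (by omega)
    refine ⟨m - k, by omega, ?_⟩
    have : a ^ (m - k) * a ^ (k + 1) = 1 * a ^ (k + 1) := by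
      rw [one_mul, ← pow_add]; rw [show m - k + (k + 1) = m + 1 by omega]; exact heq
    exact mul_right_cancel₀ (pow_ne_zero _ ha0) this
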